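/- Let n ≥ 2 and k ≥ 1 be integers, and let s > 0. For every function f : ℝ → ℝ that is three times continuously differentiable on a neighborhood of s, one has the operator commutation identity (Γ_k (𝒟_k f))(s) = (𝒟_{k−1} (Γ_k f))(s). -/

import Mathlib

/-- The second-order operator `𝒟_k f (s) = f''(s) + (n-1)·coth(s)·f'(s)
    - (k(k+n-2)/sinh²(s))·f(s)`. -/
noncomputable def Dop (n k : ℤ) (f : ℝ → ℝ) : ℝ → ℝ := fun s =>
  deriv (deriv f) s + ((n : ℝ) - 1) * (Real.cosh s / Real.sinh s) * deriv f s
    - ((k : ℝ) * ((k : ℝ) + (n : ℝ) - 2) / (Real.sinh s) ^ 2) * f s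

/-- The first-order operator `Γ_k f (s) = f'(s) + (n+k-2)·coth(s)·f(s)`. -/
noncomputable def Gop (n k : ℤ) (f : ℝ → ℝ) : ℝ → ℝ := fun s =>
  deriv f s + ((n : ℝ) + (k : ℝ) - 2) * (Real.cosh s / Real.sinh s) * f s

private lemma hasDerivAt_coth (t : ℝ) (ht : Real.sinh t ≠ 0) :
    HasDerivAt (fun u => Real.cosh u / Real.sinh u) (-(1 / Real.sinh t ^ 2)) t := by
  have h := (Real.hasDerivAt_cosh t).div (Real.hasDerivAt_sinh t) ht
  refine HasDerivAt.congr_deriv h ?_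
  have h2 := Real.cosh_sq_sub_sinh_sq t
  field_simp
  nlinarith [h2]

private lemma hasDerivAt_invsq (t : ℝ) (ht : Real.sinh t ≠ 0) :
    HasDerivAt (fun u => 1 / Real.sinh u ^ 2)
      (-(2 * Real.cosh t / Real.sinh t ^ 3)) t := by
  have hpow : HasDerivAt (fun u => Real.sinh u ^ 2)
      (2 * Real.sinh t ^ (2 - 1) * Real.cosh t) t := (Real.hasDerivAt_sinh t).pow 2
  have h := (hasDerivAt_const t (1 : ℝ)).div hpow (pow_ne_zero 2 ht)
  refine HasDerivAt.congr_deriv h ?_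
  field_simp
  ring

/-- The commutation identity `Γ_k 𝒟_k = 𝒟_{k-1} Γ_k` (Proposition `P:Com`). -/
theorem stmt_0 (n k : ℤ) (hn : 2 ≤ n) (hk : 1 ≤ k) (s : ℝ) (hs : 0 < s)
    (f : ℝ → ℝ) (hf : ContDiffAt ℝ 3 f s) :
    Gop n k (Dop n k f) s = Dop n (k - 1) (Gop n k f) s := by
  classical
  -- Get an open neighborhood where f is C³ and everything is positive
  obtain ⟨u, hu, hfu⟩ := hf.contDiffOn le_rfl (by simp)
  obtain ⟨v, hvu, hv, hsv⟩ := mem_nhds_iff.1 hu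
  set w : Set ℝ := v ∩ Set.Ioi 0 with hw_def
  have hw : IsOpen w := hv.inter isOpen_Ioi
  have hsw : s ∈ w := ⟨hsv, hs⟩
  have hfw : ContDiffOn ℝ 3 f w := (hfu.mono hvu).mono Set.inter_subset_left
  have h1 : ContDiffOn ℝ 2 (deriv f) w := by
    have : ((2 : WithTop ℕ∞) + 1) ≤ 3 := by norm_num
    exact hfw.deriv_of_isOpen hw this
  have h2 : ContDiffOn ℝ 1 (deriv (deriv f)) w := by
    have : ((1 : WithTop ℕ∞) + 1) ≤ 2 := by norm_num
    exact h1.deriv_of_isOpen hw this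
  have hd0 : ∀ t ∈ w, DifferentiableAt ℝ f t := fun t ht =>
    ((hfw.differentiableOn (by norm_num)).differentiableAt (hw.mem_nhds ht))
  have hd1 : ∀ t ∈ w, DifferentiableAt ℝ (deriv f) t := fun t ht =>
    ((h1.differentiableOn (by norm_num)).differentiableAt (hw.mem_nhds ht))
  have hd2 : ∀ t ∈ w, DifferentiableAt ℝ (deriv (deriv f)) t := fun t ht =>
    ((h2.differentiableOn (by norm_num)).differentiableAt (hw.mem_nhds ht))
  have hsinh : ∀ t ∈ w, Real.sinh t ≠ 0 := fun t ht =>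
    ne_of_gt (Real.sinh_pos_iff.2 ht.2)
  have hSs : Real.sinh s ≠ 0 := hsinh s hsw
  set c : ℝ := (n : ℝ) + (k : ℝ) - 2 with hc_def
  -- derivative of Gop n k f at every point of w
  have hG : ∀ t ∈ w, HasDerivAt (Gop n k f)
      (deriv (deriv f) t + c * (-(1 / Real.sinh t ^ 2)) * f t
        + c * (Real.cosh t / Real.sinh t) * deriv f t) t := by
    intro t ht
    have hA := (hd1 t ht).hasDerivAt
    have hB := ((hasDerivAt_coth t (hsinh t ht)).const_mul c).mul ((hd0 t ht).hasDerivAt)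
    have := hA.add hB
    refine HasDerivAt.congr_deriv this ?_
    ring
  -- the derivative function of Gop n k f agrees with an explicit formula near s
  set φ : ℝ → ℝ := fun t => deriv (deriv f) t + c * (-(1 / Real.sinh t ^ 2)) * f t
      + c * (Real.cosh t / Real.sinh t) * deriv f t with hφ_def
  have hGev : deriv (Gop n k f) =ᶠ[nhds s] φ := by
    filter_upwards [hw.mem_nhds hsw] with t ht
    exact (hG t ht).deriv
  -- second derivative of Gop n k f at s
  have hφders : HasDerivAt φ
      (deriv (deriv (deriv f)) s
        + (c * (2 * Real.cosh s / Real.sinh s ^ 3) * f s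
          + c * (-(1 / Real.sinh s ^ 2)) * deriv f s)
        + (c * (-(1 / Real.sinh s ^ 2)) * deriv f s
          + c * (Real.cosh s / Real.sinh s) * deriv (deriv f) s)) s := by
    have hA := (hd2 s hsw).hasDerivAt
    have hB := (((hasDerivAt_invsq s hSs).neg.const_mul c).mul ((hd0 s hsw).hasDerivAt))
    have hC := ((hasDerivAt_coth s hSs).const_mul c).mul ((hd1 s hsw).hasDerivAt)
    have := (hA.add hB).add hC
    refine HasDerivAt.congr_deriv this ?_
    simp only [Pi.neg_apply]
    ring
  have hGG : deriv (deriv (Gop n k f)) s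
      = deriv (deriv (deriv f)) s
        + (c * (2 * Real.cosh s / Real.sinh s ^ 3) * f s
          + c * (-(1 / Real.sinh s ^ 2)) * deriv f s)
        + (c * (-(1 / Real.sinh s ^ 2)) * deriv f s
          + c * (Real.cosh s / Real.sinh s) * deriv (deriv f) s) := by
    rw [hGev.deriv_eq]
    exact hφders.deriv
  have hG1 : deriv (Gop n k f) s
      = deriv (deriv f) s + c * (-(1 / Real.sinh s ^ 2)) * f s
        + c * (Real.cosh s / Real.sinh s) * deriv f s := (hG s hsw).deriv
  -- derivative of Dop n k f at s
  set κ : ℝ := (k : ℝ) * ((k : ℝ) + (n : ℝ) - 2) with hκ_def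
  have hDder : HasDerivAt (Dop n k f)
      (deriv (deriv (deriv f)) s
        + (((n : ℝ) - 1) * (-(1 / Real.sinh s ^ 2)) * deriv f s
          + ((n : ℝ) - 1) * (Real.cosh s / Real.sinh s) * deriv (deriv f) s)
        - (κ * (-(2 * Real.cosh s / Real.sinh s ^ 3)) * f s
          + κ / Real.sinh s ^ 2 * deriv f s)) s := by
    have hA := (hd2 s hsw).hasDerivAt
    have hB := (((hasDerivAt_coth s hSs).const_mul ((n : ℝ) - 1)).mul
      ((hd1 s hsw).hasDerivAt))
    have hC := (((hasDerivAt_invsq s hSs).const_mul κ).mul ((hd0 s hsw).hasDerivAt))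
    have hDop : Dop n k f = fun t => deriv (deriv f) t
        + ((n : ℝ) - 1) * (Real.cosh t / Real.sinh t) * deriv f t
        - κ * (1 / Real.sinh t ^ 2) * f t := by
      funext t
      simp only [Dop, hκ_def]
      ring
    rw [hDop]
    have := (hA.add hB).sub hC
    refine HasDerivAt.congr_deriv this ?_
    field_simp
  have hD1 : deriv (Dop n k f) s
      = deriv (deriv (deriv f)) s
        + (((n : ℝ) - 1) * (-(1 / Real.sinh s ^ 2)) * deriv f s
          + ((n : ℝ) - 1) * (Real.cosh s / Real.sinh s) * deriv (deriv f) s)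
        - (κ * (-(2 * Real.cosh s / Real.sinh s ^ 3)) * f s
          + κ / Real.sinh s ^ 2 * deriv f s) := hDder.deriv
  -- now unfold and compute
  have hk' : ((k : ℝ) - 1) = ((k - 1 : ℤ) : ℝ) := by push_cast; ring
  simp only [Gop, Dop] at *
  rw [hD1, hGG, hG1]
  push_cast
  set S := Real.sinh s
  set C := Real.cosh s
  set a := f s
  set b := deriv f s
  set c2 := deriv (deriv f) s
  set d3 := deriv (deriv (deriv f)) s
  field_simp
  ring
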